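/- For all x, y > 0, x·log x − y·log y + (y − x)(1 + log y) ≥ (1/2)·min{1/x, 1/y}·(x − y)². -/

import Mathlib

open Real Set

private lemma hd1 (y x : ℝ) (hx : 0 < x) (hy : 0 < y) :
    HasDerivAt (fun x => x * Real.log x - x * Real.log y - x + y - (x-y)^2/(2*y))
      (Real.log x - Real.log y - (x - y)/y) x := by
  have h1 : HasDerivAt (fun x : ℝ => x * Real.log x) (Real.log x + 1) x := by
    have := (hasDerivAt_id x).mul (Real.hasDerivAt_log hx.ne')
    refine this.congr_deriv ?_
    simp only [id_eq]
    field_simp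
  have h2 : HasDerivAt (fun x : ℝ => x * Real.log y) (Real.log y) x := by
    simpa using (hasDerivAt_id x).mul_const (Real.log y)
  have h3 : HasDerivAt (fun x : ℝ => (x-y)^2/(2*y)) ((x-y)/y) x := by
    have := (((hasDerivAt_id x).sub_const y).pow 2).div_const (2*y)
    refine this.congr_deriv ?_
    simp only [id_eq]
    field_simp
    ring
  have := (((h1.sub h2).sub (hasDerivAt_id x)).add_const y).sub h3
  refine this.congr_deriv ?_
  ring

private lemma hd2 (y x : ℝ) (hx : 0 < x) :
    HasDerivAt (fun x => x * Real.log x - x * Real.log y - x + y - (x-y)^2/(2*x))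
      (Real.log x - Real.log y - (x - y)/x + (x-y)^2/(2*x^2)) x := by
  have h1 : HasDerivAt (fun x : ℝ => x * Real.log x) (Real.log x + 1) x := by
    have := (hasDerivAt_id x).mul (Real.hasDerivAt_log hx.ne')
    refine this.congr_deriv ?_
    simp only [id_eq]
    field_simp
  have h2 : HasDerivAt (fun x : ℝ => x * Real.log y) (Real.log y) x := by
    simpa using (hasDerivAt_id x).mul_const (Real.log y)
  have h3 : HasDerivAt (fun x : ℝ => (x-y)^2/(2*x))
      ((2*(x-y)*(2*x) - (x-y)^2*2)/(2*x)^2) x := by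
    have := (((hasDerivAt_id x).sub_const y).pow 2).div
      ((hasDerivAt_id x).const_mul 2) (by positivity)
    refine this.congr_deriv ?_
    simp only [id_eq, Pi.pow_apply]
    ring
  have := (((h1.sub h2).sub (hasDerivAt_id x)).add_const y).sub h3
  refine this.congr_deriv ?_
  field_simp
  ring

theorem stmt_2 (x y : ℝ) (hx : 0 < x) (hy : 0 < y) :
    x * Real.log x - y * Real.log y + (y - x) * (1 + Real.log y) ≥
      (1 / 2) * min (1 / x) (1 / y) * (x - y) ^ 2 := by
  have key : x * Real.log x - y * Real.log y + (y - x) * (1 + Real.log y)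
      = x * Real.log x - x * Real.log y - x + y := by ring
  rw [key]
  rcases le_total x y with hxy | hxy
  · -- min = 1/y
    rw [min_eq_right (one_div_le_one_div_of_le hx hxy)]
    set f : ℝ → ℝ := fun x => x * Real.log x - x * Real.log y - x + y - (x-y)^2/(2*y) with hf
    have hanti : AntitoneOn f (Set.Ioc 0 y) := by
      have hint : interior (Set.Ioc (0:ℝ) y) = Set.Ioo 0 y := interior_Ioc
      apply antitoneOn_of_deriv_nonpos (convex_Ioc 0 y)
      · intro z hz
        exact (hd1 y z hz.1 hy).continuousAt.continuousWithinAt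
      · rw [hint]
        intro z hz
        exact (hd1 y z hz.1 hy).differentiableAt.differentiableWithinAt
      · rw [hint]
        intro z hz
        rw [(hd1 y z hz.1 hy).deriv]
        have hlog : Real.log z - Real.log y ≤ z/y - 1 := by
          rw [← Real.log_div hz.1.ne' hy.ne']
          exact Real.log_le_sub_one_of_pos (div_pos hz.1 hy)
        have : z/y - 1 = (z - y)/y := by field_simp
        linarith [this ▸ hlog]
    have h0 : f y = 0 := by simp [hf]
    have h1 : f y ≤ f x := hanti ⟨hx, hxy⟩ ⟨hy, le_refl y⟩ hxy
    rw [h0] at h1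
    have : (x-y)^2/(2*y) = 1/2 * (1/y) * (x-y)^2 := by ring
    simp only [hf] at h1
    linarith [this ▸ h1]
  · -- min = 1/x
    rw [min_eq_left (one_div_le_one_div_of_le hy hxy)]
    set g : ℝ → ℝ := fun x => x * Real.log x - x * Real.log y - x + y - (x-y)^2/(2*x) with hg
    have hmono : MonotoneOn g (Set.Ici y) := by
      have hint : interior (Set.Ici y) = Set.Ioi y := interior_Ici
      apply monotoneOn_of_deriv_nonneg (convex_Ici y)
      · intro z hz
        exact (hd2 y z (hy.trans_le hz)).continuousAt.continuousWithinAt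
      · rw [hint]
        intro z hz
        exact (hd2 y z (hy.trans (Set.mem_Ioi.mp hz))).differentiableAt.differentiableWithinAt
      · rw [hint]
        intro z hz
        have hz' : y < z := hz
        have hz0 : 0 < z := hy.trans hz'
        rw [(hd2 y z hz0).deriv]
        have hlog : Real.log y - Real.log z ≤ y/z - 1 := by
          rw [← Real.log_div hy.ne' hz0.ne']
          exact Real.log_le_sub_one_of_pos (div_pos hy hz0)
        have h4 : y/z - 1 = -((z - y)/z) := by field_simp; ring
        have h5 : Real.log z - Real.log y - (z-y)/z ≥ 0 := by
          rw [h4] at hlog; linarith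
        have h6 : (z-y)^2/(2*z^2) ≥ 0 := by positivity
        linarith
    have h0 : g y = 0 := by simp [hg]
    have h1 : g y ≤ g x := hmono (Set.mem_Ici.mpr (le_refl y)) (Set.mem_Ici.mpr hxy) hxy
    rw [h0] at h1
    have : (x-y)^2/(2*x) = 1/2 * (1/x) * (x-y)^2 := by ring
    simp only [hg] at h1
    linarith [this ▸ h1]
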